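/- Combined descent relation under the diminishing budget ε_t = η_t²: for each t, the POLK iterates satisfy E[‖f_{t+1} − f*‖_H² | F_t] ≤ ‖f_t − f*‖_H² − 2η_t (R(f_t) − R(f*)) + η_t² (4 C X₀/λ + σ²) almost surely. -/

import Mathlib

open MeasureTheory Filter
open scoped RealInnerProductSpace NNReal Topology

section CondexpAux

variable {Ω : Type*} {m m0 : MeasurableSpace Ω} {P : Measure Ω}

/-- Conditional expectation commutes with continuous linear maps. -/
theorem condexp_comp_clm_polk {E F : Type*}
    [NormedAddCommGroup E] [NormedSpace ℝ E] [CompleteSpace E]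
    [NormedAddCommGroup F] [NormedSpace ℝ F] [CompleteSpace F]
    (hm : m ≤ m0) [IsFiniteMeasure P] (T : E →L[ℝ] F) {Z : Ω → E}
    (hZ : Integrable Z P) :
    P[fun ω => T (Z ω)|m] =ᵐ[P] fun ω => T ((P[Z|m]) ω) := by
  refine (ae_eq_condExp_of_forall_setIntegral_eq hm (T.integrable_comp hZ) ?_ ?_ ?_).symm
  · intro s _ _
    exact (T.integrable_comp integrable_condExp).integrableOn
  · intro s hs hμs
    rw [T.integral_comp_comm integrable_condExp.integrableOn,
      setIntegral_condExp hm hZ hs, ← T.integral_comp_comm hZ.integrableOn]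
  · exact ⟨fun ω => T ((P[Z|m]) ω),
      T.continuous.comp_stronglyMeasurable stronglyMeasurable_condExp, EventuallyEq.rfl⟩

variable {H : Type*} [NormedAddCommGroup H] [InnerProductSpace ℝ H] [CompleteSpace H]

theorem integrable_inner_of_bound_polk {g Z : Ω → H} (hg : AEStronglyMeasurable g P)
    (hZ : Integrable Z P) {c : ℝ} (hb : ∀ ω, ‖g ω‖ ≤ c) :
    Integrable (fun ω => ⟪g ω, Z ω⟫) P :=
  Integrable.mono' (hZ.norm.const_mul c) (hg.inner hZ.aestronglyMeasurable)
    (Filter.Eventually.of_forall fun ω =>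
      (norm_inner_le_norm _ _).trans (mul_le_mul_of_nonneg_right (hb ω) (norm_nonneg _)))

theorem inner_indicator_fun_polk {s : Set Ω} (c : H) (Z : Ω → H) :
    (fun ω => (⟪s.indicator (Function.const Ω c) ω, Z ω⟫ : ℝ))
      = s.indicator fun ω => (⟪c, Z ω⟫ : ℝ) := by
  ext ω
  by_cases h : ω ∈ s <;> simp [h, Set.indicator_of_mem, Set.indicator_of_notMem]

theorem condexp_inner_simpleFunc_polk (hm : m ≤ m0) [IsFiniteMeasure P]
    (g : @SimpleFunc Ω m H) {Z : Ω → H} (hZ : Integrable Z P) :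
    P[fun ω => ⟪g ω, Z ω⟫|m] =ᵐ[P] fun ω => ⟪g ω, (P[Z|m]) ω⟫ := by
  apply @SimpleFunc.induction Ω H m _
    (fun g' => P[fun ω => ⟪g' ω, Z ω⟫|m] =ᵐ[P] fun ω => ⟪g' ω, (P[Z|m]) ω⟫)
    (fun c s hs => ?_) (fun g₁ g₂ _ h₁ h₂ => ?_) g
  · classical
    simp only [SimpleFunc.coe_piecewise, SimpleFunc.coe_const, SimpleFunc.coe_zero,
      Function.const_zero, Set.piecewise_eq_indicator]
    rw [inner_indicator_fun_polk, inner_indicator_fun_polk]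
    have hint : Integrable (fun ω => (⟪c, Z ω⟫ : ℝ)) P := by
      have := (innerSL ℝ c).integrable_comp hZ
      simpa [innerSL_apply_apply] using this
    refine (condExp_indicator hint hs).trans ?_
    have hcz : P[fun ω => (⟪c, Z ω⟫ : ℝ)|m] =ᵐ[P] fun ω => ⟪c, (P[Z|m]) ω⟫ := by
      have := condexp_comp_clm_polk hm (innerSL ℝ c) hZ
      simpa [innerSL_apply_apply] using this
    filter_upwards [hcz] with ω hω
    by_cases hωs : ω ∈ s <;>
      simp [hωs, Set.indicator_of_mem, Set.indicator_of_notMem, hω]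
  · have hib : ∀ g' : @SimpleFunc Ω m H, Integrable (fun ω => (⟪g' ω, Z ω⟫ : ℝ)) P := by
      intro g'
      obtain ⟨c, hc⟩ := @SimpleFunc.exists_forall_norm_le Ω H m _ g'
      exact integrable_inner_of_bound_polk
        ((g'.stronglyMeasurable.mono hm).aestronglyMeasurable) hZ hc
    have hL : (fun ω => (⟪(g₁ + g₂) ω, Z ω⟫ : ℝ))
        = (fun ω => (⟪g₁ ω, Z ω⟫ : ℝ)) + fun ω => (⟪g₂ ω, Z ω⟫ : ℝ) := by
      ext ω; simp [inner_add_left]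
    rw [hL]
    refine (condExp_add (hib g₁) (hib g₂) m).trans ?_
    filter_upwards [h₁, h₂] with ω hω₁ hω₂
    simp only [Pi.add_apply, hω₁, hω₂]
    simp [inner_add_left]

/-- Pull-out property of the conditional expectation for inner products. -/
theorem condexp_inner_stronglyMeasurable_polk (hm : m ≤ m0) [IsFiniteMeasure P]
    {g Z : Ω → H} (hg : StronglyMeasurable[m] g) (hZ : Integrable Z P)
    {c : ℝ} (hc : 0 ≤ c) (hgb : ∀ ω, ‖g ω‖ ≤ c) :
    P[fun ω => ⟪g ω, Z ω⟫|m] =ᵐ[P] fun ω => ⟪g ω, (P[Z|m]) ω⟫ := by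
  let fs := hg.approxBounded c
  have hfs_tendsto : ∀ᵐ ω ∂P, Tendsto (fun n => fs n ω) atTop (𝓝 (g ω)) :=
    hg.tendsto_approxBounded_ae (Filter.Eventually.of_forall hgb)
  have hfs_bound : ∀ n ω, ‖fs n ω‖ ≤ c := fun n ω => hg.norm_approxBounded_le hc n ω
  have hgZm_int : Integrable (fun ω => ⟪g ω, (P[Z|m]) ω⟫) P :=
    integrable_inner_of_bound_polk ((hg.mono hm).aestronglyMeasurable)
      integrable_condExp hgb
  have heq : P[fun ω => ⟪g ω, (P[Z|m]) ω⟫|m] = fun ω => ⟪g ω, (P[Z|m]) ω⟫ :=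
    condExp_of_stronglyMeasurable hm (hg.inner stronglyMeasurable_condExp) hgZm_int
  rw [← heq]
  refine tendsto_condExp_unique (fun n ω => ⟪fs n ω, Z ω⟫)
    (fun n ω => ⟪fs n ω, (P[Z|m]) ω⟫)
    (fun ω => ⟪g ω, Z ω⟫) (fun ω => ⟪g ω, (P[Z|m]) ω⟫)
    (fun n => integrable_inner_of_bound_polk
      (((fs n).stronglyMeasurable.mono hm).aestronglyMeasurable) hZ (hfs_bound n))
    (fun n => integrable_inner_of_bound_polk
      (((fs n).stronglyMeasurable.mono hm).aestronglyMeasurable) integrable_condExp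
      (hfs_bound n))
    ?_ ?_ (fun ω => c * ‖Z ω‖) (hZ.norm.const_mul c)
    (fun ω => c * ‖(P[Z|m]) ω‖) (integrable_condExp.norm.const_mul c) ?_ ?_ ?_
  · filter_upwards [hfs_tendsto] with ω hω
    exact hω.inner tendsto_const_nhds
  · filter_upwards [hfs_tendsto] with ω hω
    exact hω.inner tendsto_const_nhds
  · exact fun n => Filter.Eventually.of_forall fun ω =>
      (norm_inner_le_norm _ _).trans (mul_le_mul_of_nonneg_right (hfs_bound n ω) (norm_nonneg _))
  · exact fun n => Filter.Eventually.of_forall fun ω =>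
      (norm_inner_le_norm _ _).trans (mul_le_mul_of_nonneg_right (hfs_bound n ω) (norm_nonneg _))
  · intro n
    refine (condexp_inner_simpleFunc_polk hm (fs n) hZ).trans ?_
    rw [condExp_of_stronglyMeasurable hm
      ((fs n).stronglyMeasurable.inner stronglyMeasurable_condExp)
      (integrable_inner_of_bound_polk
        (((fs n).stronglyMeasurable.mono hm).aestronglyMeasurable) integrable_condExp
        (hfs_bound n))]

end CondexpAux

section ConvexAux

variable {H : Type*} [NormedAddCommGroup H] [InnerProductSpace ℝ H] [CompleteSpace H]

/-- First-order condition for convex differentiable functions. -/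
theorem grad_first_order_polk {R : H → ℝ} (hconv : ConvexOn ℝ Set.univ R) {p q gp : H}
    (hgp : HasGradientAt R gp p) : R p + ⟪gp, q - p⟫ ≤ R q := by
  have hline : HasDerivAt (fun θ : ℝ => p + θ • (q - p)) (q - p) 0 := by
    simpa using ((hasDerivAt_id (0 : ℝ)).smul_const (q - p)).const_add p
  have h2 : HasFDerivAt R (InnerProductSpace.toDual ℝ H gp) p :=
    hasGradientAt_iff_hasFDerivAt.mp hgp
  have h2' : HasFDerivAt R (InnerProductSpace.toDual ℝ H gp)
      ((fun θ : ℝ => p + θ • (q - p)) 0) := by simpa using h2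
  have hψ : HasDerivAt (fun θ : ℝ => R (p + θ • (q - p))) ⟪gp, q - p⟫ 0 := by
    have h3 := h2'.comp_hasDerivAt 0 hline
    exact h3
  have hslope : ∀ θ : ℝ, 0 < θ → θ ≤ 1 →
      slope (fun θ : ℝ => R (p + θ • (q - p))) 0 θ ≤ R q - R p := by
    intro θ h0 h1'
    have hid : (1 - θ) • p + θ • q = p + θ • (q - p) := by module
    have hpt : R (p + θ • (q - p)) ≤ (1 - θ) * R p + θ * R q := by
      have := hconv.2 (Set.mem_univ p) (Set.mem_univ q)
        (by linarith : (0:ℝ) ≤ 1 - θ) h0.le (by ring)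
      rw [hid] at this
      simpa [smul_eq_mul] using this
    rw [slope_def_field]
    simp only [zero_smul, add_zero, sub_zero]
    rw [div_le_iff₀ h0]
    nlinarith
  have htends : Tendsto (slope (fun θ : ℝ => R (p + θ • (q - p))) 0)
      (𝓝[>] (0:ℝ)) (𝓝 ⟪gp, q - p⟫) :=
    (hasDerivAt_iff_tendsto_slope.mp hψ).mono_left
      (nhdsWithin_mono 0 fun x hx => ne_of_gt hx)
  have hle : ⟪gp, q - p⟫ ≤ R q - R p := by
    refine le_of_tendsto htends ?_
    filter_upwards [Ioc_mem_nhdsGT_of_mem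
      (Set.mem_Ico.mpr ⟨le_refl (0:ℝ), zero_lt_one⟩)] with θ hθ
    exact hslope θ hθ.1 hθ.2
  linarith

/-- The derivative of a Lipschitz function is bounded. -/
theorem abs_deriv_le_of_lipschitz_polk {h : ℝ → ℝ} {K : ℝ≥0} (hl : LipschitzWith K h)
    {z d : ℝ} (hd : HasDerivAt h d z) : |d| ≤ K := by
  have ht := hasDerivAt_iff_tendsto_slope.mp hd
  refine le_of_tendsto ht.abs (Filter.Eventually.of_forall fun w => ?_)
  rcases eq_or_ne w z with hwz | hwz
  · simp [hwz]
  · rw [slope_def_field, abs_div]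
    rw [div_le_iff₀ (abs_pos.mpr (sub_ne_zero.mpr hwz))]
    have := hl.dist_le_mul w z
    rw [Real.dist_eq, Real.dist_eq] at this
    simpa [mul_comm] using this
end ConvexAux
/-- The regularized risk has a unique minimizer. -/
theorem unique_min_polk {X Y H : Type*} [MeasurableSpace X] [MeasurableSpace Y]
    [NormedAddCommGroup H] [InnerProductSpace ℝ H]
    (φ : X → H) (ℓ : ℝ → Y → ℝ)
    (hconv : ∀ y, ConvexOn ℝ Set.univ fun z => ℓ z y)
    (μ : Measure (X × Y))
    (lam : ℝ) (hlam : 0 < lam)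
    (R : H → ℝ)
    (hR : ∀ f, R f = (∫ p, ℓ ⟪f, φ p.1⟫ p.2 ∂μ) + lam / 2 * ‖f‖ ^ 2)
    (hRconv : ConvexOn ℝ Set.univ R)
    (fstar : H) (hfstar : ∀ f, R fstar ≤ R f)
    {p : H} (hp : R p = R fstar) : p = fstar := by
  by_contra hne
  set d := p - fstar with hd_def
  have hd : d ≠ 0 := sub_ne_zero.mpr hne
  have hd2 : (0:ℝ) < ‖d‖ ^ 2 := pow_pos (norm_pos_iff.mpr hd) 2
  set c : ℝ → H := fun s => fstar + s • d with hc_def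
  have hRc : ∀ s : ℝ, 0 ≤ s → s ≤ 1 → R (c s) = R fstar := by
    intro s h0 h1
    have hcs : (1 - s) • fstar + s • p = c s := by rw [hc_def, hd_def]; module
    refine le_antisymm ?_ (hfstar _)
    have h2 := hRconv.2 (Set.mem_univ fstar) (Set.mem_univ p)
      (by linarith : (0:ℝ) ≤ 1 - s) h0 (by ring)
    rw [hcs] at h2
    have h3 : (1 - s) • R fstar + s • R p = R fstar := by
      rw [hp]; simp only [smul_eq_mul]; ring
    calc R (c s) ≤ (1 - s) • R fstar + s • R p := h2
    _ = R fstar := h3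
  set ψ : ℝ → ℝ := fun s => R fstar - lam / 2 * ‖c s‖ ^ 2 with hψ_def
  have hψI : ∀ s : ℝ, 0 ≤ s → s ≤ 1 → ψ s = ∫ pr, ℓ ⟪c s, φ pr.1⟫ pr.2 ∂μ := by
    intro s h0 h1
    have h2 := hR (c s)
    have h3 := hRc s h0 h1
    simp only [hψ_def]
    linarith
  have hψquad : ∀ s : ℝ, ψ s = (R fstar - lam / 2 * ‖fstar‖ ^ 2)
      + (-(lam * ⟪fstar, d⟫)) * s + (-(lam / 2 * ‖d‖ ^ 2)) * s ^ 2 := by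
    intro s
    simp only [hψ_def, hc_def]
    rw [norm_add_sq_real, real_inner_smul_right, norm_smul, Real.norm_eq_abs, mul_pow, sq_abs]
    ring
  have hroots : ∀ x y z : ℝ, ψ x = 0 → ψ y = 0 → ψ z = 0 → x = y ∨ x = z ∨ y = z := by
    intro x y z hx hy hz
    by_contra hcon
    push_neg at hcon
    obtain ⟨hxy, hxz, hyz⟩ := hcon
    rw [hψquad] at hx hy hz
    have h1 : (x - y) * ((-(lam * ⟪fstar, d⟫)) + (-(lam / 2 * ‖d‖ ^ 2)) * (x + y)) = 0 := by
      linear_combination hx - hy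
    have h2 : (x - z) * ((-(lam * ⟪fstar, d⟫)) + (-(lam / 2 * ‖d‖ ^ 2)) * (x + z)) = 0 := by
      linear_combination hx - hz
    have h1' := (mul_eq_zero.mp h1).resolve_left (sub_ne_zero.mpr hxy)
    have h2' := (mul_eq_zero.mp h2).resolve_left (sub_ne_zero.mpr hxz)
    have h3 : (-(lam / 2 * ‖d‖ ^ 2)) * (y - z) = 0 := by linear_combination h1' - h2'
    rcases mul_eq_zero.mp h3 with h4 | h4
    · nlinarith
    · exact hyz (sub_eq_zero.mp h4)
  have hkey : ∀ a b : ℝ, 0 ≤ a → b ≤ 1 → a < b →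
      ψ a ≠ 0 → ψ ((a + b) / 2) ≠ 0 → ψ b ≠ 0 → False := by
    intro a b ha hb hab hψa hψm hψb
    have hb0 : (0:ℝ) ≤ b := le_trans ha hab.le
    have ha1 : a ≤ 1 := le_trans hab.le hb
    have hm0 : (0:ℝ) ≤ (a + b) / 2 := by linarith
    have hm1 : (a + b) / 2 ≤ 1 := by linarith
    have hInt : ∀ s : ℝ, 0 ≤ s → s ≤ 1 → ψ s ≠ 0 →
        Integrable (fun pr : X × Y => ℓ ⟪c s, φ pr.1⟫ pr.2) μ := by
      intro s h0 h1 hne'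
      by_contra hni
      exact hne' ((hψI s h0 h1).trans (integral_undef hni))
    have hIa := hInt a ha ha1 hψa
    have hIb := hInt b hb0 hb hψb
    have hIm := hInt ((a + b) / 2) hm0 hm1 hψm
    have hpt : ∀ pr : X × Y, ℓ ⟪c ((a + b) / 2), φ pr.1⟫ pr.2
        ≤ (1/2) * ℓ ⟪c a, φ pr.1⟫ pr.2 + (1/2) * ℓ ⟪c b, φ pr.1⟫ pr.2 := by
      intro pr
      have hc2 : (⟪c ((a + b) / 2), φ pr.1⟫ : ℝ)
          = (1/2) * ⟪c a, φ pr.1⟫ + (1/2) * ⟪c b, φ pr.1⟫ := by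
        simp only [hc_def, inner_add_left, real_inner_smul_left]
        ring
      have h5 := (hconv pr.2).2 (Set.mem_univ (⟪c a, φ pr.1⟫ : ℝ))
        (Set.mem_univ (⟪c b, φ pr.1⟫ : ℝ))
        (by norm_num : (0:ℝ) ≤ 1/2) (by norm_num : (0:ℝ) ≤ 1/2) (by norm_num)
      rw [hc2]
      simpa [smul_eq_mul] using h5
    have hle := integral_mono hIm ((hIa.const_mul (1/2)).add (hIb.const_mul (1/2))) hpt
    simp only [Pi.add_apply] at hle
    rw [integral_add (hIa.const_mul (1/2)) (hIb.const_mul (1/2)),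
      integral_const_mul, integral_const_mul] at hle
    rw [← hψI a ha ha1, ← hψI b hb0 hb, ← hψI ((a + b) / 2) hm0 hm1] at hle
    rw [hψquad a, hψquad b, hψquad ((a + b) / 2)] at hle
    have h6 : (a - b) ^ 2 ≤ 0 := by nlinarith [mul_pos hlam hd2]
    have h7 : (a - b) ^ 2 = 0 := le_antisymm h6 (sq_nonneg _)
    exact (ne_of_lt hab) (sub_eq_zero.mp (sq_eq_zero_iff.mp h7))
  have ex : ∀ aa bb : ℝ, 0 ≤ aa → bb ≤ 1 → aa < bb →
      ∃ s, ψ s = 0 ∧ aa ≤ s ∧ s ≤ bb := by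
    intro aa bb h0 h1 h2
    by_cases hc1 : ψ aa = 0
    · exact ⟨aa, hc1, le_refl _, h2.le⟩
    by_cases hc2 : ψ ((aa + bb) / 2) = 0
    · exact ⟨(aa + bb) / 2, hc2, by linarith, by linarith⟩
    by_cases hc3 : ψ bb = 0
    · exact ⟨bb, hc3, h2.le, le_refl _⟩
    exact absurd (hkey aa bb h0 h1 h2 hc1 hc2 hc3) (not_false)
  obtain ⟨s₁, hs₁, hs₁a, hs₁b⟩ := ex 0 (1/4) (by norm_num) (by norm_num) (by norm_num)
  obtain ⟨s₂, hs₂, hs₂a, hs₂b⟩ := ex (3/8) (1/2) (by norm_num) (by norm_num) (by norm_num)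
  obtain ⟨s₃, hs₃, hs₃a, hs₃b⟩ := ex (5/8) (3/4) (by norm_num) (by norm_num) (by norm_num)
  rcases hroots s₁ s₂ s₃ hs₁ hs₂ hs₃ with h | h | h <;> linarith

/-- **Combined descent relation under the diminishing budget `ε_t = η_t²`.**
For each `t`, the POLK iterates satisfy
`E[‖f_{t+1} − f*‖² | F_t] ≤ ‖f_t − f*‖² − 2η_t (R(f_t) − R(f*)) + η_t² (4CX₀/λ + σ²)`
almost surely. -/
theorem polk_combined_descent_diminishing_budget
    {H : Type*} [NormedAddCommGroup H] [InnerProductSpace ℝ H] [CompleteSpace H]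
    {X : Type*} [MetricSpace X] [CompactSpace X] [MeasurableSpace X]
    {Y : Type*} [MeasurableSpace Y]
    (φ : X → H) (hφc : Continuous φ) (X₀ : ℝ) (hφb : ∀ x, ‖φ x‖ ≤ X₀)
    (ℓ ℓ' : ℝ → Y → ℝ) (C : ℝ≥0)
    (hconv : ∀ y, ConvexOn ℝ Set.univ fun z => ℓ z y)
    (hlip : ∀ y, LipschitzWith C fun z => ℓ z y)
    (hderiv : ∀ z y, HasDerivAt (fun z' => ℓ z' y) (ℓ' z y) z)
    (μ : Measure (X × Y)) [IsProbabilityMeasure μ]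
    (lam : ℝ) (hlam : 0 < lam)
    (R : H → ℝ)
    (hR : ∀ f, R f = (∫ p, ℓ ⟪f, φ p.1⟫ p.2 ∂μ) + lam / 2 * ‖f‖ ^ 2)
    (gradR : H → H) (hgrad : ∀ f, HasGradientAt R (gradR f) f)
    (hRconv : ConvexOn ℝ Set.univ R)
    (fstar : H) (hfstar : ∀ f, R fstar ≤ R f)
    (hfstar_bound : ‖fstar‖ ≤ (C : ℝ) * X₀ / lam)
    {Ω : Type*} {m0 : MeasurableSpace Ω} (P : Measure Ω) [IsProbabilityMeasure P]
    (ℱ : Filtration ℕ m0)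
    (ξ : ℕ → Ω → X × Y)
    (hlaw : ∀ t, Measure.map (ξ t) P = μ)
    (hiid : ProbabilityTheory.iIndepFun ξ P)
    (hindep : ∀ t,
      ProbabilityTheory.Indep (MeasurableSpace.comap (ξ t) inferInstance) (ℱ t) P)
    (hmeas : ∀ t, Measurable[ℱ (t + 1)] (ξ t))
    (η : ℕ → ℝ) (hηpos : ∀ t, 0 < η t) (hηlam : ∀ t, η t < 1 / lam)
    (ε : ℕ → ℝ) (hε : ∀ t, ε t = η t ^ 2)
    (f : ℕ → Ω → H) (hf0 : ∀ ω, f 0 ω = 0)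
    (hadapted : StronglyAdapted ℱ f)
    -- `f (t+1) ω` is the orthogonal projection of the stochastic gradient step
    -- onto a closed linear subspace `V` of `H`:
    (hproj : ∀ t ω, ∃ V : Submodule ℝ H, IsClosed (V : Set H) ∧ f (t + 1) ω ∈ V ∧
      ∀ g ∈ V, ⟪((1 - η t * lam) • f t ω
        - (η t * ℓ' ⟪f t ω, φ (ξ t ω).1⟫ (ξ t ω).2) • φ (ξ t ω).1) - f (t + 1) ω, g⟫ = 0)
    -- sparse approximation budget:
    (hbudget : ∀ t ω,
      ‖f (t + 1) ω - ((1 - η t * lam) • f t ω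
        - (η t * ℓ' ⟪f t ω, φ (ξ t ω).1⟫ (ξ t ω).2) • φ (ξ t ω).1)‖ ≤ ε t)
    (σ : ℝ)
    -- unbiasedness of the regularized stochastic gradient:
    (hunbiased : ∀ t,
      P[(fun ω => ℓ' ⟪f t ω, φ (ξ t ω).1⟫ (ξ t ω).2 • φ (ξ t ω).1 + lam • f t ω) | ℱ t]
        =ᵐ[P] fun ω => gradR (f t ω))
    -- finite conditional second moment of the projected stochastic gradient:
    (hvar : ∀ t, ∀ᵐ ω ∂P,
      (P[(fun ω' => ‖(η t)⁻¹ • (f t ω' - f (t + 1) ω')‖ ^ 2) | ℱ t]) ω ≤ σ ^ 2) :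
    ∀ t, ∀ᵐ ω ∂P,
      (P[(fun ω' => ‖f (t + 1) ω' - fstar‖ ^ 2) | ℱ t]) ω
        ≤ ‖f t ω - fstar‖ ^ 2 - 2 * η t * (R (f t ω) - R fstar)
          + η t ^ 2 * (4 * (C : ℝ) * X₀ / lam + σ ^ 2) := by
  -- global preliminaries
  have hΩ : Nonempty Ω := by
    by_contra hemp
    rw [not_nonempty_iff] at hemp
    have h1 : P Set.univ = 1 := measure_univ
    rw [Set.univ_eq_empty_iff.mpr hemp, measure_empty] at h1
    exact zero_ne_one h1
  obtain ⟨ω₀⟩ := hΩ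
  have hX₀ : 0 ≤ X₀ := le_trans (norm_nonneg (φ (ξ 0 ω₀).1)) (hφb (ξ 0 ω₀).1)
  have hC0 : (0:ℝ) ≤ C := C.coe_nonneg
  have hone_eta : ∀ s, 0 ≤ 1 - η s * lam := by
    intro s
    have h2 : η s * lam < 1 := by
      have := (lt_div_iff₀ hlam).mp (hηlam s)
      linarith
    linarith
  have hℓ'b : ∀ z y, |ℓ' z y| ≤ (C:ℝ) := fun z y =>
    abs_deriv_le_of_lipschitz_polk (hlip y) (hderiv z y)
  have huniq : ∀ {p : H}, R p = R fstar → p = fstar := fun {p} hp =>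
    unique_min_polk φ ℓ hconv μ lam hlam R hR hRconv fstar hfstar hp
  set B0 : ℝ := (C:ℝ) * X₀ / lam with hB0def
  have hB0 : 0 ≤ B0 := by rw [hB0def]; positivity
  have hlamB0 : lam * B0 = (C:ℝ) * X₀ := by rw [hB0def]; field_simp
  -- boundedness of iterates
  have hfb : ∀ s ω, ‖f s ω‖ ≤ B0 := by
    intro s
    induction s with
    | zero => intro ω; rw [hf0]; simpa using hB0
    | succ s ih =>
      intro ω
      obtain ⟨V, hVc, hmem, horth⟩ := hproj s ω
      set step : H := (1 - η s * lam) • f s ω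
        - (η s * ℓ' ⟪f s ω, φ (ξ s ω).1⟫ (ξ s ω).2) • φ (ξ s ω).1 with hstep_def
      have h0 := horth _ hmem
      rw [inner_sub_left] at h0
      have hss : (⟪f (s+1) ω, f (s+1) ω⟫:ℝ) = ‖f (s+1) ω‖ ^ 2 := real_inner_self_eq_norm_sq _
      have h1 : ‖f (s+1) ω‖ ^ 2 ≤ ‖step‖ * ‖f (s+1) ω‖ := by
        rw [← hss]
        have h2 : (⟪f (s+1) ω, f (s+1) ω⟫:ℝ) = ⟪step, f (s+1) ω⟫ := by linarith
        rw [h2]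
        exact real_inner_le_norm _ _
      have hstep : ‖step‖ ≤ B0 := by
        have h3 : ‖step‖ ≤ (1 - η s * lam) * ‖f s ω‖
            + (η s * |ℓ' ⟪f s ω, φ (ξ s ω).1⟫ (ξ s ω).2|) * ‖φ (ξ s ω).1‖ := by
          rw [hstep_def]
          refine (norm_sub_le _ _).trans ?_
          rw [norm_smul, norm_smul, Real.norm_eq_abs, Real.norm_eq_abs,
            abs_of_nonneg (hone_eta s), abs_mul, abs_of_nonneg (hηpos s).le]
        have h4 : (1 - η s * lam) * ‖f s ω‖ ≤ (1 - η s * lam) * B0 :=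
          mul_le_mul_of_nonneg_left (ih ω) (hone_eta s)
        have h5 : (η s * |ℓ' ⟪f s ω, φ (ξ s ω).1⟫ (ξ s ω).2|) * ‖φ (ξ s ω).1‖
            ≤ (η s * (C:ℝ)) * X₀ := by
          refine mul_le_mul (mul_le_mul_of_nonneg_left (hℓ'b _ _) (hηpos s).le)
            (hφb _) (norm_nonneg _) (mul_nonneg (hηpos s).le hC0)
        have h6 : (1 - η s * lam) * B0 + (η s * (C:ℝ)) * X₀ = B0 := by
          have : η s * ((C:ℝ) * X₀) = η s * (lam * B0) := by rw [hlamB0]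
          nlinarith [this]
        linarith
      nlinarith [norm_nonneg (f (s+1) ω), hB0]
  -- main estimate, for a fixed time t
  intro t
  have hm : ℱ t ≤ m0 := ℱ.le t
  have hub := hunbiased t
  have hvt := hvar t
  set g : Ω → H := fun ω => f t ω - fstar with hg_def
  set D : Ω → H := fun ω => f t ω - f (t+1) ω with hD_def
  set Gf : Ω → H := fun ω =>
    ℓ' ⟪f t ω, φ (ξ t ω).1⟫ (ξ t ω).2 • φ (ξ t ω).1 + lam • f t ω with hGf_def
  set ee : Ω → H := fun ω => f (t+1) ω - ((1 - η t * lam) • f t ω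
    - (η t * ℓ' ⟪f t ω, φ (ξ t ω).1⟫ (ξ t ω).2) • φ (ξ t ω).1) with he_def
  have hft_sm : StronglyMeasurable[ℱ t] (f t) := hadapted t
  have hft1_sm : StronglyMeasurable[m0] (f (t+1)) := (hadapted (t+1)).mono (ℱ.le (t+1))
  have hg_sm : StronglyMeasurable[ℱ t] g := hft_sm.sub stronglyMeasurable_const
  have hg_sm0 : StronglyMeasurable[m0] g := hg_sm.mono hm
  have hD_sm0 : StronglyMeasurable[m0] D := (hft_sm.mono hm).sub hft1_sm
  have hgB : ∀ ω, ‖g ω‖ ≤ 2 * B0 := by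
    intro ω
    simp only [hg_def]
    exact (norm_sub_le _ _).trans (by linarith [hfb t ω, hfstar_bound])
  have hDB : ∀ ω, ‖D ω‖ ≤ 2 * B0 := by
    intro ω
    simp only [hD_def]
    exact (norm_sub_le _ _).trans (by linarith [hfb t ω, hfb (t+1) ω])
  have hGB : ∀ ω, ‖Gf ω‖ ≤ 2 * ((C:ℝ) * X₀) := by
    intro ω
    simp only [hGf_def]
    refine (norm_add_le _ _).trans ?_
    have h1 : ‖ℓ' ⟪f t ω, φ (ξ t ω).1⟫ (ξ t ω).2 • φ (ξ t ω).1‖ ≤ (C:ℝ) * X₀ := by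
      rw [norm_smul, Real.norm_eq_abs]
      exact mul_le_mul (hℓ'b _ _) (hφb _) (norm_nonneg _) hC0
    have h2 : ‖lam • f t ω‖ ≤ (C:ℝ) * X₀ := by
      rw [norm_smul, Real.norm_eq_abs, abs_of_pos hlam, ← hlamB0]
      exact mul_le_mul_of_nonneg_left (hfb t ω) hlam.le
    linarith
  have heB : ∀ ω, ‖ee ω‖ ≤ η t ^ 2 := by
    intro ω
    have h1 := hbudget t ω
    rw [hε t] at h1
    simpa only [he_def] using h1
  have hDGe : ∀ ω, D ω = η t • Gf ω - ee ω := by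
    intro ω
    simp only [hD_def, hGf_def, he_def, smul_add, smul_smul]
    module
  -- integrability facts
  have int_sq : ∀ (h : Ω → H), StronglyMeasurable[m0] h → (∀ ω, ‖h ω‖ ≤ 2 * B0) →
      Integrable (fun ω => ‖h ω‖ ^ 2) P := by
    intro h hsm hb
    have hsm2 : StronglyMeasurable[m0] (fun ω => ‖h ω‖ ^ 2) := by
      have hid : (fun ω => ‖h ω‖ ^ 2) = fun ω => ‖h ω‖ * ‖h ω‖ := by ext ω; ring
      rw [hid]; exact hsm.norm.mul hsm.norm
    refine Integrable.mono' (integrable_const ((2 * B0) ^ 2)) hsm2.aestronglyMeasurable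
      (Filter.Eventually.of_forall fun ω => ?_)
    rw [Real.norm_eq_abs, abs_of_nonneg (by positivity)]
    exact pow_le_pow_left₀ (norm_nonneg _) (hb ω) 2
  have hD_int : Integrable D P :=
    Integrable.mono' (integrable_const (2 * B0)) hD_sm0.aestronglyMeasurable
      (Filter.Eventually.of_forall hDB)
  have hint_gD : Integrable (fun ω => (⟪g ω, D ω⟫:ℝ)) P :=
    integrable_inner_of_bound_polk hg_sm0.aestronglyMeasurable hD_int hgB
  have hsqg_int : Integrable (fun ω => ‖g ω‖ ^ 2) P := int_sq g hg_sm0 hgB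
  have hsqD_int : Integrable (fun ω => ‖D ω‖ ^ 2) P := int_sq D hD_sm0 hDB
  have hsmsq : StronglyMeasurable[ℱ t] (fun ω' => ‖g ω'‖ ^ 2) := by
    have hid : (fun ω' => ‖g ω'‖ ^ 2) = fun ω' => ‖g ω'‖ * ‖g ω'‖ := by ext ω'; ring
    rw [hid]; exact hg_sm.norm.mul hg_sm.norm
  -- decomposition of the conditional expectation
  have hEi : P[(fun ω' => ‖f (t+1) ω' - fstar‖ ^ 2)|ℱ t] =ᵐ[P]
      P[((fun ω' => ‖g ω'‖ ^ 2) - (2:ℝ) • fun ω' => (⟪g ω', D ω'⟫:ℝ))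
        + (fun ω' => ‖D ω'‖ ^ 2)|ℱ t] := by
    refine condExp_congr_ae (Filter.Eventually.of_forall fun ω => ?_)
    simp only [Pi.add_apply, Pi.sub_apply, Pi.smul_apply, smul_eq_mul]
    have hgd : f (t+1) ω - fstar = g ω - D ω := by simp only [hg_def, hD_def]; abel
    rw [hgd, norm_sub_sq_real]
  have h2F2 : Integrable ((2:ℝ) • fun ω' => (⟪g ω', D ω'⟫:ℝ)) P := hint_gD.smul (2:ℝ)
  have hE2 := condExp_add (μ := P) (m := ℱ t)
    (hsqg_int.sub h2F2) hsqD_int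
  have hE3 := condExp_sub (μ := P) (m := ℱ t) hsqg_int h2F2
  have hE4 := condExp_smul (μ := P) (m := ℱ t) (2:ℝ) (fun ω' => (⟪g ω', D ω'⟫:ℝ))
  have hE5 : P[(fun ω' => ‖g ω'‖ ^ 2)|ℱ t] = fun ω' => ‖g ω'‖ ^ 2 :=
    condExp_of_stronglyMeasurable hm hsmsq hsqg_int
  have hdecomp : ∀ᵐ ω ∂P, (P[(fun ω' => ‖f (t+1) ω' - fstar‖ ^ 2)|ℱ t]) ω
      = ‖g ω‖ ^ 2 - 2 * ((P[(fun ω' => (⟪g ω', D ω'⟫:ℝ))|ℱ t]) ω)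
        + (P[(fun ω' => ‖D ω'‖ ^ 2)|ℱ t]) ω := by
    filter_upwards [hEi, hE2, hE3, hE4] with ω h1 h2 h3 h4
    rw [h1, h2]
    simp only [Pi.add_apply, Pi.sub_apply, Pi.smul_apply, smul_eq_mul] at h3 h4 ⊢
    rw [h3, h4, hE5]
  -- variance bound
  have hvarb : ∀ᵐ ω ∂P, (P[(fun ω' => ‖D ω'‖ ^ 2)|ℱ t]) ω ≤ η t ^ 2 * σ ^ 2 := by
    have hη := (hηpos t).ne'
    have hptD : (fun ω' => ‖D ω'‖ ^ 2)
        = (η t ^ 2) • fun ω' => ‖(η t)⁻¹ • (f t ω' - f (t+1) ω')‖ ^ 2 := by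
      ext ω'
      simp only [hD_def, Pi.smul_apply, smul_eq_mul]
      rw [norm_smul, Real.norm_eq_abs, abs_inv, abs_of_pos (hηpos t), mul_pow]
      field_simp
    have h6 := condExp_smul (μ := P) (m := ℱ t) (η t ^ 2)
      (fun ω' => ‖(η t)⁻¹ • (f t ω' - f (t+1) ω')‖ ^ 2)
    rw [hptD]
    filter_upwards [h6, hvt] with ω h1 h2
    rw [h1]
    simp only [Pi.smul_apply, smul_eq_mul]
    exact mul_le_mul_of_nonneg_left h2 (sq_nonneg _)
  -- cross term bound
  have hcross : ∀ᵐ ω ∂P, η t * (R (f t ω) - R fstar) - 2 * B0 * η t ^ 2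
      ≤ (P[(fun ω' => (⟪g ω', D ω'⟫:ℝ))|ℱ t]) ω := by
    have hgrad_ineq : ∀ ω, R (f t ω) - R fstar ≤ (⟪g ω, gradR (f t ω)⟫:ℝ) := by
      intro ω
      have h6 := grad_first_order_polk hRconv (hgrad (f t ω)) (q := fstar)
      have h7 : (⟪g ω, gradR (f t ω)⟫:ℝ) = ⟪gradR (f t ω), f t ω - fstar⟫ := by
        simp only [hg_def]
        exact real_inner_comm _ _
      have h8 : (⟪gradR (f t ω), fstar - f t ω⟫:ℝ) = -⟪gradR (f t ω), f t ω - fstar⟫ := by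
        rw [← inner_neg_right]
        congr 1
        abel
      rw [h8] at h6
      rw [h7]
      linarith
    by_cases hGint : Integrable Gf P
    · -- the stochastic gradient is integrable
      have hub' : P[Gf|ℱ t] =ᵐ[P] fun ω => gradR (f t ω) := hub
      have hpull := condexp_inner_stronglyMeasurable_polk hm hg_sm hGint
        (by positivity : (0:ℝ) ≤ 2 * B0) hgB
      have hgG_int : Integrable (fun ω => (⟪g ω, Gf ω⟫:ℝ)) P :=
        integrable_inner_of_bound_polk hg_sm0.aestronglyMeasurable hGint hgB
      have hge_int : Integrable (fun ω => (⟪g ω, ee ω⟫:ℝ)) P := by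
        have hid : (fun ω => (⟪g ω, ee ω⟫:ℝ))
            = fun ω => η t * ⟪g ω, Gf ω⟫ - ⟪g ω, D ω⟫ := by
          ext ω
          have h7 : ee ω = η t • Gf ω - D ω := by rw [hDGe ω]; abel
          rw [h7, inner_sub_right, real_inner_smul_right]
        rw [hid]
        exact (hgG_int.const_mul (η t)).sub hint_gD
      have hsplit : ∀ᵐ ω ∂P, (P[(fun ω' => (⟪g ω', D ω'⟫:ℝ))|ℱ t]) ω
          = η t * ((P[(fun ω' => (⟪g ω', Gf ω'⟫:ℝ))|ℱ t]) ω)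
            - (P[(fun ω' => (⟪g ω', ee ω'⟫:ℝ))|ℱ t]) ω := by
        have hidD : (fun ω' => (⟪g ω', D ω'⟫:ℝ))
            = ((η t) • fun ω' => (⟪g ω', Gf ω'⟫:ℝ)) - fun ω' => (⟪g ω', ee ω'⟫:ℝ) := by
          ext ω'
          simp only [Pi.sub_apply, Pi.smul_apply, smul_eq_mul]
          rw [hDGe ω', inner_sub_right, real_inner_smul_right]
        rw [hidD]
        have h8 := condExp_sub (μ := P) (m := ℱ t) (hgG_int.smul (η t)) hge_int
        have h9 := condExp_smul (μ := P) (m := ℱ t) (η t) (fun ω' => (⟪g ω', Gf ω'⟫:ℝ))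
        filter_upwards [h8, h9] with ω h8' h9'
        simp only [Pi.sub_apply, Pi.smul_apply, smul_eq_mul] at h8' h9'
        rw [h8', h9']
      have hEe_bdd : ∀ᵐ ω ∂P,
          |(P[(fun ω' => (⟪g ω', ee ω'⟫:ℝ))|ℱ t]) ω| ≤ 2 * B0 * η t ^ 2 := by
        have h10 : ∀ᵐ ω ∂P, |(⟪g ω, ee ω⟫:ℝ)|
            ≤ ((⟨2 * B0 * η t ^ 2, by positivity⟩ : ℝ≥0) : ℝ) := by
          refine Filter.Eventually.of_forall fun ω => ?_
          have h11 := norm_inner_le_norm (𝕜 := ℝ) (g ω) (ee ω)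
          have h12 : ‖g ω‖ * ‖ee ω‖ ≤ (2 * B0) * (η t ^ 2) :=
            mul_le_mul (hgB ω) (heB ω) (norm_nonneg _) (by positivity)
          rw [Real.norm_eq_abs] at h11
          simp only [NNReal.coe_mk]
          nlinarith
        have h13 := ae_bdd_condExp_of_ae_bdd (m := ℱ t) h10
        exact h13
      filter_upwards [hsplit, hpull, hub', hEe_bdd] with ω h1 h2 h3 h4
      rw [h1, h2, h3]
      have h9 := mul_le_mul_of_nonneg_left (hgrad_ineq ω) (hηpos t).le
      have h10 := (abs_le.mp h4).2
      linarith
    · -- degenerate case: stochastic gradient not integrable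
      have h0 : P[Gf|ℱ t] = 0 := condExp_of_not_integrable hGint
      have hub' : P[Gf|ℱ t] =ᵐ[P] fun ω => gradR (f t ω) := hub
      rw [h0] at hub'
      have hfeq : ∀ᵐ ω ∂P, f t ω = fstar := by
        filter_upwards [hub'] with ω hω
        simp only [Pi.zero_apply] at hω
        have h6 := grad_first_order_polk hRconv (hgrad (f t ω)) (q := fstar)
        rw [← hω] at h6
        simp only [inner_zero_left, add_zero] at h6
        exact huniq (le_antisymm h6 (hfstar _))
      have hzero : (fun ω' => (⟪g ω', D ω'⟫:ℝ)) =ᵐ[P] fun _ => (0:ℝ) := by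
        filter_upwards [hfeq] with ω hω
        have hg0 : g ω = 0 := by simp only [hg_def]; rw [hω]; simp
        rw [hg0, inner_zero_left]
      have hcz : P[(fun ω' => (⟪g ω', D ω'⟫:ℝ))|ℱ t] =ᵐ[P] fun _ => (0:ℝ) := by
        refine (condExp_congr_ae hzero).trans ?_
        rw [show (fun _ : Ω => (0:ℝ)) = (0 : Ω → ℝ) from rfl, condExp_zero]
      filter_upwards [hcz, hfeq] with ω h1 h2
      rw [h1]
      have h3 : R (f t ω) - R fstar = 0 := by rw [h2]; ring
      rw [h3]
      have h5 : 0 ≤ 2 * B0 * η t ^ 2 := by positivity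
      simp only [mul_zero]
      linarith
  -- conclusion
  filter_upwards [hdecomp, hcross, hvarb] with ω h1 h2 h3
  rw [h1]
  have h4 : ‖g ω‖ ^ 2 = ‖f t ω - fstar‖ ^ 2 := by simp only [hg_def]
  have h5 : η t ^ 2 * (4 * (C:ℝ) * X₀ / lam + σ ^ 2)
      = 4 * B0 * η t ^ 2 + η t ^ 2 * σ ^ 2 := by rw [hB0def]; ring
  rw [h4] at *
  linarith
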